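/- If E is a maximally irredundant subset of a boolean algebra B, then the subalgebra generated by E is dense in B. -/

import Mathlib

open Cardinal Set

universe u
variable {B : Type u} [BooleanAlgebra B]

/-- Membership in the boolean subalgebra of `B` generated by `E`. -/
inductive InGen (E : Set B) : B → Prop
  | base {a : B} : a ∈ E → InGen E a
  | bot : InGen E ⊥
  | compl {a : B} : InGen E a → InGen E aᶜ
  | sup {a b : B} : InGen E a → InGen E b → InGen E (a ⊔ b)

/-- `E` is irredundant. -/
def Irred (E : Set B) : Prop := ∀ a ∈ E, ¬ InGen (E \ {a}) a

/-- `E` is independent. -/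
def Indep (E : Set B) : Prop :=
  ∀ F G : Finset B, ↑F ⊆ E → ↑G ⊆ E → Disjoint F G →
    F.inf id ⊓ G.inf (fun a => aᶜ) ≠ ⊥

/-- `S` is dense in `B`. -/
def DenseSub (S : Set B) : Prop := ∀ b : B, b ≠ ⊥ → ∃ d ∈ S, d ≠ ⊥ ∧ d ≤ b

/-- pi-weight of `B`: least size of a dense subset. -/
noncomputable def piWeight (B : Type u) [BooleanAlgebra B] : Cardinal :=
  sInf {c | ∃ S : Set B, DenseSub S ∧ #S = c}

/-- `E` is a maximal irredundant subset of `B`. -/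
def MaxIrred (E : Set B) : Prop :=
  Irred E ∧ ∀ b : B, b ∉ E → ¬ Irred (insert b E)

/-- least size of a maximal irredundant subset of `B`. -/
noncomputable def irrMM (B : Type u) [BooleanAlgebra B] : Cardinal :=
  sInf {c | ∃ E : Set B, MaxIrred E ∧ #E = c}


lemma InGen.mono {S T : Set B} {a : B} (hST : S ⊆ T) (h : InGen S a) : InGen T a := by
  induction h with
  | base hx => exact InGen.base (hST hx)
  | bot => exact InGen.bot
  | compl _ ih => exact InGen.compl ih
  | sup _ _ ih1 ih2 => exact InGen.sup ih1 ih2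

lemma InGen.top {S : Set B} : InGen S (⊤ : B) := by
  simpa using InGen.compl (InGen.bot (E := S))

lemma InGen.inf {S : Set B} {a b : B} (ha : InGen S a) (hb : InGen S b) :
    InGen S (a ⊓ b) := by
  have : a ⊓ b = (aᶜ ⊔ bᶜ)ᶜ := by simp
  rw [this]
  exact InGen.compl (InGen.sup (InGen.compl ha) (InGen.compl hb))

lemma InGen.decomp {S : Set B} {b a : B} (h : InGen (insert b S) a) :
    ∃ x y : B, InGen S x ∧ InGen S y ∧ a = (x ⊓ b) ⊔ (y ⊓ bᶜ) := by
  induction h with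
  | @base c hc =>
    rcases hc with rfl | hc
    · exact ⟨⊤, ⊥, InGen.top, InGen.bot, by simp⟩
    · exact ⟨c, c, InGen.base hc, InGen.base hc, by
        rw [← inf_sup_left]; simp⟩
  | bot => exact ⟨⊥, ⊥, InGen.bot, InGen.bot, by simp⟩
  | @compl c _ ih =>
    obtain ⟨x, y, hx, hy, rfl⟩ := ih
    refine ⟨xᶜ, yᶜ, InGen.compl hx, InGen.compl hy, ?_⟩
    refine (compl_unique ?_ ?_)
    · rw [inf_sup_left, inf_sup_right, inf_sup_right]
      have e1 : x ⊓ b ⊓ (xᶜ ⊓ b) = ⊥ := by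
        have : x ⊓ b ⊓ (xᶜ ⊓ b) = x ⊓ xᶜ ⊓ (b ⊓ b) := by ac_rfl
        rw [this]; simp
      have e2 : y ⊓ bᶜ ⊓ (xᶜ ⊓ b) = ⊥ := by
        have : y ⊓ bᶜ ⊓ (xᶜ ⊓ b) = y ⊓ xᶜ ⊓ (bᶜ ⊓ b) := by ac_rfl
        rw [this]; simp
      have e3 : x ⊓ b ⊓ (yᶜ ⊓ bᶜ) = ⊥ := by
        have : x ⊓ b ⊓ (yᶜ ⊓ bᶜ) = x ⊓ yᶜ ⊓ (b ⊓ bᶜ) := by ac_rfl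
        rw [this]; simp
      have e4 : y ⊓ bᶜ ⊓ (yᶜ ⊓ bᶜ) = ⊥ := by
        have : y ⊓ bᶜ ⊓ (yᶜ ⊓ bᶜ) = y ⊓ yᶜ ⊓ (bᶜ ⊓ bᶜ) := by ac_rfl
        rw [this]; simp
      rw [e1, e2, e3, e4]; simp
    · have e1 : (x ⊓ b ⊔ y ⊓ bᶜ) ⊔ (xᶜ ⊓ b ⊔ yᶜ ⊓ bᶜ)
          = (x ⊓ b ⊔ xᶜ ⊓ b) ⊔ (y ⊓ bᶜ ⊔ yᶜ ⊓ bᶜ) := by ac_rfl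
      rw [e1, ← inf_sup_right, ← inf_sup_right]
      simp
  | @sup c d _ _ ih1 ih2 =>
    obtain ⟨x1, y1, hx1, hy1, rfl⟩ := ih1
    obtain ⟨x2, y2, hx2, hy2, rfl⟩ := ih2
    refine ⟨x1 ⊔ x2, y1 ⊔ y2, InGen.sup hx1 hx2, InGen.sup hy1 hy2, ?_⟩
    rw [inf_sup_right, inf_sup_right]
    ac_rfl

theorem dense_of_maxIrred {B : Type u} [BooleanAlgebra B] (E : Set B)
    (h : MaxIrred E) :
    ∀ b : B, b ≠ ⊥ → ∃ d : B, InGen E d ∧ d ≠ ⊥ ∧ d ≤ b := by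
  intro b hb
  by_cases hbE : InGen E b
  · exact ⟨b, hbE, hb, le_rfl⟩
  have hbnE : b ∉ E := fun hx => hbE (InGen.base hx)
  have hni := h.2 b hbnE
  unfold Irred at hni
  push_neg at hni
  obtain ⟨a, haE, hgen⟩ := hni
  rcases haE with rfl | haE
  · exfalso
    apply hbE
    refine InGen.mono ?_ hgen
    intro z hz
    exact hz.1.resolve_left hz.2
  have hab : a ≠ b := fun hab => hbnE (hab ▸ haE)
  have hins : insert b E \ {a} = insert b (E \ {a}) := by
    ext z
    simp only [Set.mem_diff, Set.mem_insert_iff, Set.mem_singleton_iff]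
    constructor
    · rintro ⟨rfl | hz, hza⟩
      · exact Or.inl rfl
      · exact Or.inr ⟨hz, hza⟩
    · rintro (rfl | ⟨hz, hza⟩)
      · exact ⟨Or.inl rfl, hab.symm⟩
      · exact ⟨Or.inr hz, hza⟩
  rw [hins] at hgen
  obtain ⟨x, y, hx, hy, heq⟩ := InGen.decomp hgen
  -- a ⊓ bᶜ = y ⊓ bᶜ
  have key : a ⊓ bᶜ = y ⊓ bᶜ := by
    rw [heq, inf_sup_right, inf_assoc, inf_assoc]
    simp
  have hyE : InGen E y := InGen.mono Set.diff_subset hy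
  have haInG : InGen E a := InGen.base haE
  refine ⟨(a ⊓ yᶜ) ⊔ (y ⊓ aᶜ), ?_, ?_, ?_⟩
  · exact InGen.sup (InGen.inf haInG (InGen.compl hyE))
      (InGen.inf hyE (InGen.compl haInG))
  · intro hd
    have h1 : a ⊓ yᶜ = ⊥ := le_bot_iff.mp (le_trans le_sup_left (le_of_eq hd))
    have h2 : y ⊓ aᶜ = ⊥ := le_bot_iff.mp (le_trans le_sup_right (le_of_eq hd))
    have hay : a = y := by
      apply le_antisymm
      · rw [← sdiff_eq_bot_iff, _root_.sdiff_eq]; exact h1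
      · rw [← sdiff_eq_bot_iff, _root_.sdiff_eq]; exact h2
    exact h.1 a haE (hay ▸ hy)
  · apply sup_le
    · rw [← sdiff_eq_bot_iff, _root_.sdiff_eq, inf_right_comm, key]
      have : y ⊓ bᶜ ⊓ yᶜ = y ⊓ yᶜ ⊓ bᶜ := by ac_rfl
      rw [this]; simp
    · rw [← sdiff_eq_bot_iff, _root_.sdiff_eq]
      have : y ⊓ aᶜ ⊓ bᶜ = y ⊓ bᶜ ⊓ aᶜ := by ac_rfl
      rw [this, ← key]
      have : a ⊓ bᶜ ⊓ aᶜ = a ⊓ aᶜ ⊓ bᶜ := by ac_rfl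
      rw [this]; simp
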